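/- In the linear-quadratic McKean-Vlasov transition μ ↦ Φ_{k+1}(μ, α̃), where Φ_{k+1}(μ,α̃) is the law of (B x + B̄ μ̄ + C α̃(x) + C̄ λ̄) + (D x + D̄ μ̄ + H α̃(x) + H̄ λ̄) ε with x ∼ μ, λ̄ = mean of α̃⋆μ, ε ∼ N(0,1) independent, the mean satisfies mean(Φ_{k+1}(μ,α̃)) = (B + B̄) μ̄ + (C + C̄) λ̄, and for any symmetric matrix Λ, Var(Φ_{k+1}(μ,α̃))(Λ) = Var(μ)(BᵀΛB + DᵀΛD) + μ̄ᵀ(D+D̄)ᵀΛ(D+D̄)μ̄ + Var(α̃⋆μ)(HᵀΛH + CᵀΛC) + λ̄ᵀ(H+H̄)ᵀΛ(H+H̄)λ̄ + 2∫(x−μ̄)ᵀ(DᵀΛH + BᵀΛC)α̃(x)μ(dx) + 2μ̄ᵀ(D+D̄)ᵀΛ(H+H̄)λ̄. -/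

import Mathlib

open MeasureTheory ProbabilityTheory Matrix

/-- The `Λ`-weighted variance `Var(ν)(Λ) = ∫ yᵀΛy ν(dy) − ν̄ᵀΛν̄` of a measure on `ℝ^k`. -/
noncomputable def quadVar {k : ℕ} (ν : Measure (Fin k → ℝ)) (Λ : Matrix (Fin k) (Fin k) ℝ) : ℝ :=
  (∫ y, y ⬝ᵥ Λ.mulVec y ∂ν) - (∫ y, y ∂ν) ⬝ᵥ Λ.mulVec (∫ y, y ∂ν)

section GaussAux
open Real
open scoped NNReal ENNReal

noncomputable def stdPdf (x : ℝ) : ℝ := (Real.sqrt (2 * Real.pi))⁻¹ * Real.exp (-x ^ 2 / 2)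

lemma stdPdf_eq : gaussianPDFReal 0 1 = stdPdf := by
  funext x
  simp [gaussianPDFReal, stdPdf]

lemma stdPdf_nonneg (x : ℝ) : 0 ≤ stdPdf x := by
  rw [← stdPdf_eq]; exact gaussianPDFReal_nonneg 0 1 x

lemma measurable_stdPdf : Measurable stdPdf := by
  rw [← stdPdf_eq]; exact measurable_gaussianPDFReal 0 1

lemma gaussian_repr (g : ℝ → ℝ) :
    ∫ e, g e ∂(gaussianReal 0 1) = ∫ x, stdPdf x * g x := by
  rw [gaussianReal_of_var_ne_zero 0 one_ne_zero]
  have h1 : gaussianPDF 0 1 = fun x => ((Real.toNNReal (stdPdf x) : ℝ≥0) : ℝ≥0∞) := by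
    funext x
    rw [gaussianPDF, ← stdPdf_eq]
    rfl
  rw [h1, integral_withDensity_eq_integral_smul measurable_stdPdf.real_toNNReal g]
  congr 1
  funext x
  simp [NNReal.smul_def, Real.coe_toNNReal _ (stdPdf_nonneg x)]

lemma gaussian_integrable_of (g : ℝ → ℝ) (h : Integrable (fun x => stdPdf x * g x)) :
    Integrable g (gaussianReal 0 1) := by
  rw [gaussianReal_of_var_ne_zero 0 one_ne_zero]
  have h1 : gaussianPDF 0 1 = fun x => ((Real.toNNReal (stdPdf x) : ℝ≥0) : ℝ≥0∞) := by
    funext x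
    rw [gaussianPDF, ← stdPdf_eq]
    rfl
  rw [h1, integrable_withDensity_iff_integrable_smul measurable_stdPdf.real_toNNReal]
  refine h.congr (ae_of_all _ fun x => ?_)
  simp [NNReal.smul_def, Real.coe_toNNReal _ (stdPdf_nonneg x)]

lemma exp_form (x : ℝ) : Real.exp (-x ^ 2 / 2) = Real.exp (-(1/2 : ℝ) * x ^ 2) := by
  ring_nf

lemma integrable_stdPdf_mul_id : Integrable (fun x => stdPdf x * x) := by
  have h := (integrable_rpow_mul_exp_neg_mul_sq (b := 1/2) (by norm_num) (s := 1) (by norm_num))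
  have h2 : Integrable (fun x : ℝ => (Real.sqrt (2*Real.pi))⁻¹ * (x ^ (1:ℝ) * Real.exp (-(1/2) * x ^ 2))) :=
    Integrable.const_mul h _
  refine h2.congr (ae_of_all _ fun x => ?_)
  simp only [Real.rpow_one, stdPdf, exp_form]
  ring

lemma integrable_stdPdf_mul_sq : Integrable (fun x => stdPdf x * x ^ 2) := by
  have h := (integrable_rpow_mul_exp_neg_mul_sq (b := 1/2) (by norm_num) (s := 2) (by norm_num))
  have h2 : Integrable (fun x : ℝ => (Real.sqrt (2*Real.pi))⁻¹ * (x ^ (2:ℝ) * Real.exp (-(1/2) * x ^ 2))) :=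
    Integrable.const_mul h _
  refine h2.congr (ae_of_all _ fun x => ?_)
  have : x ^ (2:ℝ) = x ^ (2:ℕ) := by
    rw [show ((2:ℝ)) = ((2:ℕ):ℝ) by norm_num, Real.rpow_natCast]
  simp only [this, stdPdf, exp_form]
  ring

lemma gaussian_int_id : Integrable (fun e : ℝ => e) (gaussianReal 0 1) :=
  gaussian_integrable_of _ integrable_stdPdf_mul_id

lemma gaussian_int_sq : Integrable (fun e : ℝ => e ^ 2) (gaussianReal 0 1) :=
  gaussian_integrable_of _ integrable_stdPdf_mul_sq

lemma gaussian_mean : ∫ e, e ∂(gaussianReal 0 1) = 0 := by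
  rw [gaussian_repr]
  have hodd : ∀ x : ℝ, stdPdf (-x) * (-x) = -(stdPdf x * x) := by
    intro x; simp only [stdPdf, neg_sq]; ring
  have h := integral_neg_eq_self (fun x : ℝ => stdPdf x * x) volume
  rw [show (fun x : ℝ => stdPdf (-x) * (-x)) = fun x => -(stdPdf x * x) from funext hodd] at h
  rw [integral_neg] at h
  linarith

lemma gaussian_sq : ∫ e, e ^ 2 ∂(gaussianReal 0 1) = 1 := by
  rw [gaussian_repr]
  have hcomp : ∀ x : ℝ, stdPdf x * x ^ 2
      = (Real.sqrt (2*π))⁻¹ * ((fun t : ℝ => t ^ 2 * Real.exp (-(1/2) * t ^ 2)) |x|) := by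
    intro x
    simp only [stdPdf, sq_abs]
    rw [exp_form]
    ring
  rw [show (fun x : ℝ => stdPdf x * x ^ 2)
      = fun x => (Real.sqrt (2*π))⁻¹ * ((fun t : ℝ => t ^ 2 * Real.exp (-(1/2) * t ^ 2)) |x|)
      from funext hcomp]
  rw [integral_const_mul,
    integral_comp_abs (f := fun t : ℝ => t ^ 2 * Real.exp (-(1/2) * t ^ 2))]
  have hIoi : ∫ x in Set.Ioi (0:ℝ), x ^ 2 * Real.exp (-(1/2) * x ^ 2)
      = (1/2 : ℝ) ^ (-(3:ℝ)/2) * (1 / 2) * Real.Gamma ((3:ℝ)/2) := by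
    have h := integral_rpow_mul_exp_neg_mul_rpow (p := 2) (q := 2) (b := 1/2)
      (by norm_num) (by norm_num) (by norm_num)
    rw [show ((2:ℝ)+1)/2 = (3:ℝ)/2 by norm_num, show (-((2:ℝ)+1)/2) = -(3:ℝ)/2 by norm_num] at h
    rw [← h]
    refine setIntegral_congr_fun measurableSet_Ioi (fun x hx => ?_)
    have h2 : x ^ (2:ℝ) = x ^ (2:ℕ) := by
      rw [show ((2:ℝ)) = ((2:ℕ):ℝ) by norm_num, Real.rpow_natCast]
    rw [h2]
  have hG : Real.Gamma ((3:ℝ)/2) = Real.sqrt π / 2 := by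
    rw [show (3:ℝ)/2 = 1/2 + 1 by norm_num, Real.Gamma_add_one (by norm_num),
      Real.Gamma_one_half_eq]
    ring
  have hpow : (1/2 : ℝ) ^ (-(3:ℝ)/2) = 2 * Real.sqrt 2 := by
    rw [show (1/2:ℝ) = 2⁻¹ by norm_num, Real.inv_rpow (by norm_num : (0:ℝ) ≤ 2),
      show (-(3:ℝ)/2) = -((3:ℝ)/2) by norm_num, Real.rpow_neg (by norm_num : (0:ℝ) ≤ 2), inv_inv,
      show ((3:ℝ)/2) = 1 + 1/2 by norm_num, Real.rpow_add (by norm_num : (0:ℝ) < 2),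
      Real.rpow_one, ← Real.sqrt_eq_rpow]
  rw [hIoi, hG, hpow, Real.sqrt_mul (by norm_num : (0:ℝ) ≤ 2)]
  have hs2 : Real.sqrt 2 > 0 := Real.sqrt_pos.mpr (by norm_num)
  have hsp : Real.sqrt π > 0 := Real.sqrt_pos.mpr Real.pi_pos
  field_simp

end GaussAux

section MatrixAux
variable {k l : ℕ}

lemma measurable_mulVec (M : Matrix (Fin k) (Fin l) ℝ) :
    Measurable (fun v : Fin l → ℝ => M.mulVec v) := by
  refine measurable_pi_lambda _ fun i => ?_
  simp only [Matrix.mulVec, dotProduct]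
  exact Finset.measurable_sum _ fun j _ => (measurable_pi_apply j).const_mul _

lemma measurable_dot {X : Type*} [MeasurableSpace X] {f g : X → Fin k → ℝ}
    (hf : Measurable f) (hg : Measurable g) : Measurable (fun x => f x ⬝ᵥ g x) := by
  simp only [dotProduct]
  exact Finset.measurable_sum _ fun j _ =>
    ((measurable_pi_apply j).comp hf).mul ((measurable_pi_apply j).comp hg)

lemma abs_dot_le (u v : Fin k → ℝ) : |u ⬝ᵥ v| ≤ k * ‖u‖ * ‖v‖ := by
  calc |u ⬝ᵥ v| ≤ ∑ i, |u i * v i| := Finset.abs_sum_le_sum_abs _ _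
  _ ≤ ∑ _i : Fin k, ‖u‖ * ‖v‖ := by
      refine Finset.sum_le_sum fun i _ => ?_
      rw [abs_mul]
      exact mul_le_mul (norm_le_pi_norm u i) (norm_le_pi_norm v i) (abs_nonneg _) (norm_nonneg _)
  _ = k * ‖u‖ * ‖v‖ := by simp [mul_assoc]

lemma mulVec_norm_le (M : Matrix (Fin k) (Fin l) ℝ) :
    ∃ K : ℝ, 0 ≤ K ∧ ∀ v, ‖M.mulVec v‖ ≤ K * ‖v‖ := by
  refine ⟨‖(Matrix.mulVecLin M).toContinuousLinearMap‖, norm_nonneg _, fun v => ?_⟩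
  simpa using (Matrix.mulVecLin M).toContinuousLinearMap.le_opNorm v

lemma integral_linmap {X : Type*} [MeasurableSpace X] {μ : Measure X}
    {F : Type*} [NormedAddCommGroup F] [NormedSpace ℝ F] [CompleteSpace F]
    (ℓ : (Fin k → ℝ) →ₗ[ℝ] F) {f : X → Fin k → ℝ} (hf : Integrable f μ) :
    ∫ x, ℓ (f x) ∂μ = ℓ (∫ x, f x ∂μ) := by
  have := (LinearMap.toContinuousLinearMap ℓ).integral_comp_comm hf
  simpa using this

lemma integrable_mulVec_comp {X : Type*} [MeasurableSpace X] {μ : Measure X}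
    (M : Matrix (Fin k) (Fin l) ℝ) {f : X → Fin l → ℝ} (hf : Integrable f μ) :
    Integrable (fun x => M.mulVec (f x)) μ := by
  have := ((Matrix.mulVecLin M).toContinuousLinearMap).integrable_comp hf
  simpa using this

lemma integral_mulVec_comm {X : Type*} [MeasurableSpace X] {μ : Measure X}
    (M : Matrix (Fin k) (Fin l) ℝ) {f : X → Fin l → ℝ} (hf : Integrable f μ) :
    ∫ x, M.mulVec (f x) ∂μ = M.mulVec (∫ x, f x ∂μ) := by
  have := integral_linmap (Matrix.mulVecLin M) hf
  simpa using this

lemma integral_dot_comm {X : Type*} [MeasurableSpace X] {μ : Measure X}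
    (c : Fin k → ℝ) {f : X → Fin k → ℝ} (hf : Integrable f μ) :
    ∫ x, c ⬝ᵥ f x ∂μ = c ⬝ᵥ ∫ x, f x ∂μ := by
  have hl : ((Fin k → ℝ) →ₗ[ℝ] ℝ) := by
    refine ⟨⟨fun v => c ⬝ᵥ v, fun u v => ?_⟩, fun r v => ?_⟩
    · exact dotProduct_add c u v
    · simp [dotProduct_smul]
  exact integral_linmap (⟨⟨fun v => c ⬝ᵥ v, fun u v => dotProduct_add c u v⟩,
    fun r v => by simp [dotProduct_smul]⟩ : (Fin k → ℝ) →ₗ[ℝ] ℝ) hf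

end MatrixAux

set_option maxHeartbeats 4000000 in
/-- Mean and `Λ`-weighted variance of the linear-quadratic McKean-Vlasov transition
`Φ(μ,α̃) = Law((Bx + B̄μ̄ + Cα̃(x) + C̄λ̄) + (Dx + D̄μ̄ + Hα̃(x) + H̄λ̄) ε)`, `x ∼ μ`,
`ε ∼ N(0,1)` independent, with `μ̄ = ∫x μ(dx)` and `λ̄ = ∫α̃ dμ`. -/
theorem lq_transition_mean_and_variance {d m : ℕ}
    (B Bb D Db : Matrix (Fin d) (Fin d) ℝ) (C Cb H Hb : Matrix (Fin d) (Fin m) ℝ)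
    (μ : Measure (Fin d → ℝ)) [IsProbabilityMeasure μ]
    (hμ2 : ∫⁻ x, (‖x‖₊ : ENNReal) ^ 2 ∂μ < ⊤)
    (α : (Fin d → ℝ) → Fin m → ℝ) (hαm : Measurable α)
    (hαgrowth : ∃ Cα : ℝ, ∀ x, ‖α x‖ ≤ Cα * (1 + ‖x‖))
    (μbar : Fin d → ℝ) (hμbar : μbar = ∫ x, x ∂μ)
    (lbar : Fin m → ℝ) (hlbar : lbar = ∫ x, α x ∂μ)
    (Φ : Measure (Fin d → ℝ))
    (hΦ : Φ = μ.bind (fun x => (gaussianReal 0 1).map (fun e =>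
      (B.mulVec x + Bb.mulVec μbar + C.mulVec (α x) + Cb.mulVec lbar)
        + e • (D.mulVec x + Db.mulVec μbar + H.mulVec (α x) + Hb.mulVec lbar)))) :
    (∫ x', x' ∂Φ) = (B + Bb).mulVec μbar + (C + Cb).mulVec lbar
    ∧ ∀ Λ : Matrix (Fin d) (Fin d) ℝ, Λ.IsSymm →
      quadVar Φ Λ
        = quadVar μ (Bᵀ * Λ * B + Dᵀ * Λ * D)
          + μbar ⬝ᵥ ((D + Db)ᵀ * Λ * (D + Db)).mulVec μbar
          + quadVar (μ.map α) (Hᵀ * Λ * H + Cᵀ * Λ * C)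
          + lbar ⬝ᵥ ((H + Hb)ᵀ * Λ * (H + Hb)).mulVec lbar
          + 2 * ∫ x, (x - μbar) ⬝ᵥ (Dᵀ * Λ * H + Bᵀ * Λ * C).mulVec (α x) ∂μ
          + 2 * (μbar ⬝ᵥ ((D + Db)ᵀ * Λ * (H + Hb)).mulVec lbar) := by
  obtain ⟨Cα, hCα⟩ := hαgrowth
  have hCα0 : 0 ≤ Cα := le_trans (norm_nonneg (α 0)) (by simpa using hCα 0)
  set γ : Measure ℝ := gaussianReal 0 1 with hγ
  set a : (Fin d → ℝ) → (Fin d → ℝ) :=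
    fun x => B.mulVec x + Bb.mulVec μbar + C.mulVec (α x) + Cb.mulVec lbar with ha
  set b : (Fin d → ℝ) → (Fin d → ℝ) :=
    fun x => D.mulVec x + Db.mulVec μbar + H.mulVec (α x) + Hb.mulVec lbar with hb
  set F : (Fin d → ℝ) × ℝ → (Fin d → ℝ) := fun p => a p.1 + p.2 • b p.1 with hFdef
  -- measurability
  have ha_meas : Measurable a :=
    (((measurable_mulVec B).add measurable_const).add
      ((measurable_mulVec C).comp hαm)).add measurable_const
  have hb_meas : Measurable b :=
    (((measurable_mulVec D).add measurable_const).add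
      ((measurable_mulVec H).comp hαm)).add measurable_const
  have hF_meas : Measurable F :=
    (ha_meas.comp measurable_fst).add (measurable_snd.smul (hb_meas.comp measurable_fst))
  have hg_meas : ∀ x, Measurable (fun e : ℝ => a x + e • b x) :=
    fun x => measurable_const.add (measurable_id.smul measurable_const)
  -- Φ as a pushforward of a product
  have hΦ' : Φ = (μ.prod γ).map F := by
    rw [hΦ]
    show μ.bind (fun x => γ.map (fun e : ℝ => a x + e • b x)) = (μ.prod γ).map F
    have hκ : Measurable (fun x => γ.map (fun e : ℝ => a x + e • b x)) := by
      refine Measure.measurable_of_measurable_coe _ fun s hs => ?_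
      have heq : ∀ x, γ.map (fun e : ℝ => a x + e • b x) s = γ (Prod.mk x ⁻¹' (F ⁻¹' s)) := by
        intro x
        rw [Measure.map_apply (hg_meas x) hs]
        rfl
      simp_rw [heq]
      exact measurable_measure_prodMk_left (hF_meas hs)
    ext s hs
    rw [Measure.bind_apply hs hκ.aemeasurable, Measure.map_apply hF_meas hs,
      Measure.prod_apply (hF_meas hs)]
    congr 1
    funext x
    rw [Measure.map_apply (hg_meas x) hs]
    rfl
  -- integrability on μ
  have hx2 : Integrable (fun x : Fin d → ℝ => ‖x‖^2) μ := by
    refine ⟨(measurable_id.norm.pow_const 2).aestronglyMeasurable, ?_⟩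
    rw [HasFiniteIntegral]
    have heq : ∀ x : Fin d → ℝ, ‖‖x‖^2‖ₑ = (‖x‖₊ : ENNReal)^2 := by
      intro x
      rw [enorm_pow]; congr 1; simp [enorm]
    simp_rw [heq]
    exact hμ2
  have hnorm : Integrable (fun x : Fin d → ℝ => ‖x‖) μ := by
    refine ((integrable_const (1:ℝ)).add hx2).mono'
      measurable_id.norm.aestronglyMeasurable (ae_of_all _ fun x => ?_)
    simp only [norm_norm, Pi.add_apply]
    nlinarith [sq_nonneg (‖x‖ - 1), norm_nonneg x]
  have hquad : Integrable (fun x : Fin d → ℝ => (1 + ‖x‖)^2) μ := by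
    have : (fun x : Fin d → ℝ => (1 + ‖x‖)^2)
        = fun x => (1 + 2*‖x‖) + ‖x‖^2 := by funext x; ring
    rw [this]
    exact ((integrable_const (1:ℝ)).add (hnorm.const_mul 2)).add hx2
  have hid : Integrable (fun x : Fin d → ℝ => x) μ := by
    refine ((integrable_const (1:ℝ)).add hx2).mono'
      measurable_id.aestronglyMeasurable (ae_of_all _ fun x => ?_)
    simp only [id, Pi.add_apply]
    nlinarith [sq_nonneg (‖x‖ - 1), norm_nonneg x]
  have hαint : Integrable α μ := by
    refine (((integrable_const (1:ℝ)).add hnorm).const_mul Cα).mono'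
      hαm.aestronglyMeasurable (ae_of_all _ fun x => ?_)
    simpa [mul_add] using hCα x
  have integrable_bound : ∀ (f : (Fin d → ℝ) → ℝ), AEStronglyMeasurable f μ → ∀ (K : ℝ),
      (∀ x, |f x| ≤ K * (1+‖x‖)^2) → Integrable f μ := by
    intro f hm K hbd
    refine (hquad.const_mul K).mono' hm (ae_of_all _ fun x => ?_)
    simpa [Real.norm_eq_abs] using hbd x
  -- norm bounds for a and b
  obtain ⟨KB, hKB0, hKB⟩ := mulVec_norm_le B
  obtain ⟨KC, hKC0, hKC⟩ := mulVec_norm_le C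
  obtain ⟨KD, hKD0, hKD⟩ := mulVec_norm_le D
  obtain ⟨KH, hKH0, hKH⟩ := mulVec_norm_le H
  set Ka : ℝ := KB + KC*Cα + ‖Bb.mulVec μbar‖ + ‖Cb.mulVec lbar‖ with hKa
  set Kb : ℝ := KD + KH*Cα + ‖Db.mulVec μbar‖ + ‖Hb.mulVec lbar‖ with hKbdef
  have hKa0 : 0 ≤ Ka := by positivity
  have hKb0 : 0 ≤ Kb := by positivity
  have ha_bd : ∀ x, ‖a x‖ ≤ Ka * (1 + ‖x‖) := by
    intro x
    have h1 : ‖a x‖ ≤ ‖B.mulVec x‖ + ‖Bb.mulVec μbar‖ + ‖C.mulVec (α x)‖ + ‖Cb.mulVec lbar‖ := by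
      calc ‖a x‖ ≤ ‖B.mulVec x + Bb.mulVec μbar + C.mulVec (α x)‖ + ‖Cb.mulVec lbar‖ :=
            norm_add_le _ _
      _ ≤ ‖B.mulVec x‖ + ‖Bb.mulVec μbar‖ + ‖C.mulVec (α x)‖ + ‖Cb.mulVec lbar‖ := by
            refine add_le_add_left ((norm_add_le _ _).trans (add_le_add_left (norm_add_le _ _) _)) _
    have h2 := hKB x
    have h3 := hKC (α x)
    have h4 := hCα x
    have h5 : KC * ‖α x‖ ≤ KC * (Cα * (1 + ‖x‖)) := mul_le_mul_of_nonneg_left h4 hKC0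
    nlinarith [norm_nonneg x, norm_nonneg (Bb.mulVec μbar), norm_nonneg (Cb.mulVec lbar)]
  have hb_bd : ∀ x, ‖b x‖ ≤ Kb * (1 + ‖x‖) := by
    intro x
    have h1 : ‖b x‖ ≤ ‖D.mulVec x‖ + ‖Db.mulVec μbar‖ + ‖H.mulVec (α x)‖ + ‖Hb.mulVec lbar‖ := by
      calc ‖b x‖ ≤ ‖D.mulVec x + Db.mulVec μbar + H.mulVec (α x)‖ + ‖Hb.mulVec lbar‖ :=
            norm_add_le _ _
      _ ≤ ‖D.mulVec x‖ + ‖Db.mulVec μbar‖ + ‖H.mulVec (α x)‖ + ‖Hb.mulVec lbar‖ := by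
            refine add_le_add_left ((norm_add_le _ _).trans (add_le_add_left (norm_add_le _ _) _)) _
    have h2 := hKD x
    have h3 := hKH (α x)
    have h4 := hCα x
    have h5 : KH * ‖α x‖ ≤ KH * (Cα * (1 + ‖x‖)) := mul_le_mul_of_nonneg_left h4 hKH0
    nlinarith [norm_nonneg x, norm_nonneg (Db.mulVec μbar), norm_nonneg (Hb.mulVec lbar)]
  have hF_bd : ∀ p : (Fin d → ℝ) × ℝ, ‖F p‖ ≤ (1 + ‖p.1‖) * (Ka + Kb * |p.2|) := by
    intro p
    calc ‖F p‖ ≤ ‖a p.1‖ + ‖p.2 • b p.1‖ := norm_add_le _ _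
    _ = ‖a p.1‖ + |p.2| * ‖b p.1‖ := by rw [norm_smul, Real.norm_eq_abs]
    _ ≤ Ka * (1 + ‖p.1‖) + |p.2| * (Kb * (1 + ‖p.1‖)) := by
          gcongr
          · exact ha_bd p.1
          · exact hb_bd p.1
    _ = (1 + ‖p.1‖) * (Ka + Kb * |p.2|) := by ring
  -- gaussian integrabilities
  have hγabs : Integrable (fun e : ℝ => |e|) γ := gaussian_int_id.abs
  -- the mean
  have hmean : (∫ x', x' ∂Φ) = (B + Bb).mulVec μbar + (C + Cb).mulVec lbar := by
    rw [hΦ', integral_map (f := fun y : Fin d → ℝ => y) hF_meas.aemeasurable aestronglyMeasurable_id]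
    have hFint : Integrable F (μ.prod γ) := by
      have hgint : Integrable (fun p : (Fin d → ℝ) × ℝ => (1 + ‖p.1‖) * (Ka + Kb * |p.2|))
          (μ.prod γ) :=
        Integrable.mul_prod ((integrable_const (1:ℝ)).add hnorm)
          ((integrable_const Ka).add (hγabs.const_mul Kb))
      exact hgint.mono' hF_meas.aestronglyMeasurable (ae_of_all _ fun p => hF_bd p)
    rw [integral_prod _ hFint]
    have hinner : ∀ x, (∫ e, F (x, e) ∂γ) = a x := by
      intro x
      have : (∫ e, F (x, e) ∂γ) = ∫ e, a x + e • b x ∂γ := rfl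
      rw [this, integral_add (integrable_const _) (gaussian_int_id.smul_const (b x)),
        integral_const, integral_smul_const]
      rw [show ∫ (x : ℝ), x ∂γ = 0 from gaussian_mean, probReal_univ]
      simp
    rw [show (fun x => ∫ e, F (x, e) ∂γ) = a from funext hinner]
    have h1 : Integrable (fun x => B.mulVec x) μ := integrable_mulVec_comp B hid
    have h2 : Integrable (fun x => C.mulVec (α x)) μ := integrable_mulVec_comp C hαint
    have h12 : Integrable (fun x => B.mulVec x + Bb.mulVec μbar) μ := h1.add (integrable_const _)
    have h123 : Integrable (fun x => B.mulVec x + Bb.mulVec μbar + C.mulVec (α x)) μ :=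
      h12.add h2
    rw [ha]
    rw [integral_add h123 (integrable_const _), integral_add h12 h2,
      integral_add h1 (integrable_const _),
      integral_mulVec_comm B hid, integral_mulVec_comm C hαint, integral_const, integral_const,
      probReal_univ, ← hμbar, ← hlbar]
    simp [Matrix.add_mulVec]
    abel
  refine ⟨hmean, ?_⟩
  intro Λ hΛ
  obtain ⟨KΛ, hKΛ0, hKΛ⟩ := mulVec_norm_le Λ
  -- symmetry of the bilinear form
  have hsym : ∀ u v : Fin d → ℝ, u ⬝ᵥ Λ.mulVec v = v ⬝ᵥ Λ.mulVec u := by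
    intro u v
    rw [Matrix.dotProduct_mulVec]
    conv_lhs => rw [← hΛ.eq]
    rw [Matrix.vecMul_transpose, dotProduct_comm]
  have hqd : ∀ {k l : ℕ} (M : Matrix (Fin d) (Fin k) ℝ) (N : Matrix (Fin d) (Fin l) ℝ)
      (u : Fin k → ℝ) (v : Fin l → ℝ),
      u ⬝ᵥ (Mᵀ * Λ * N).mulVec v = (M.mulVec u) ⬝ᵥ Λ.mulVec (N.mulVec v) := by
    intro k l M N u v
    rw [← Matrix.mulVec_mulVec, ← Matrix.mulVec_mulVec, Matrix.dotProduct_mulVec,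
      Matrix.vecMul_transpose]
  -- integrability workhorse for quadratic forms
  have iqq : ∀ {k l : ℕ} (M : Matrix (Fin k) (Fin l) ℝ)
      (f : (Fin d → ℝ) → (Fin k → ℝ)) (g : (Fin d → ℝ) → (Fin l → ℝ)),
      Measurable f → Measurable g → ∀ (Kf Kg : ℝ), 0 ≤ Kf → 0 ≤ Kg →
      (∀ x, ‖f x‖ ≤ Kf * (1 + ‖x‖)) → (∀ x, ‖g x‖ ≤ Kg * (1 + ‖x‖)) →
      Integrable (fun x => f x ⬝ᵥ M.mulVec (g x)) μ := by
    intro k l M f g hf hg Kf Kg hKf0 hKg0 hbf hbg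
    obtain ⟨KM, hKM0, hKM⟩ := mulVec_norm_le M
    refine integrable_bound _
      ((measurable_dot hf ((measurable_mulVec M).comp hg)).aestronglyMeasurable)
      (k * KM * Kf * Kg) fun x => ?_
    have h0 := abs_dot_le (f x) (M.mulVec (g x))
    have h1 : ‖M.mulVec (g x)‖ ≤ KM * (Kg * (1 + ‖x‖)) :=
      (hKM _).trans (mul_le_mul_of_nonneg_left (hbg x) hKM0)
    have h2 : ‖f x‖ * ‖M.mulVec (g x)‖ ≤ (Kf * (1 + ‖x‖)) * (KM * (Kg * (1 + ‖x‖))) :=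
      mul_le_mul (hbf x) h1 (norm_nonneg _) (by positivity)
    calc |f x ⬝ᵥ M.mulVec (g x)| ≤ (k:ℝ) * ‖f x‖ * ‖M.mulVec (g x)‖ := h0
    _ = (k:ℝ) * (‖f x‖ * ‖M.mulVec (g x)‖) := by ring
    _ ≤ (k:ℝ) * ((Kf * (1 + ‖x‖)) * (KM * (Kg * (1 + ‖x‖)))) :=
        mul_le_mul_of_nonneg_left h2 (Nat.cast_nonneg k)
    _ = (k:ℝ) * KM * Kf * Kg * (1 + ‖x‖)^2 := by ring
  -- elementary growth bounds
  have hone : ∀ x : Fin d → ℝ, ‖x‖ ≤ 1 * (1 + ‖x‖) := by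
    intro x; nlinarith [norm_nonneg x]
  have hcb : ∀ (c : Fin d → ℝ) (x : Fin d → ℝ), ‖(fun _ : Fin d → ℝ => c) x‖ ≤ ‖c‖ * (1 + ‖x‖) := by
    intro c x; simp only; nlinarith [norm_nonneg c, norm_nonneg x]
  have hBxb : ∀ x : Fin d → ℝ, ‖B.mulVec x‖ ≤ KB * (1 + ‖x‖) := by
    intro x; refine (hKB x).trans ?_; nlinarith [norm_nonneg x]
  have hDxb : ∀ x : Fin d → ℝ, ‖D.mulVec x‖ ≤ KD * (1 + ‖x‖) := by
    intro x; refine (hKD x).trans ?_; nlinarith [norm_nonneg x]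
  have hCab : ∀ x : Fin d → ℝ, ‖C.mulVec (α x)‖ ≤ (KC * Cα) * (1 + ‖x‖) := by
    intro x
    refine (hKC (α x)).trans ?_
    rw [mul_assoc]
    exact mul_le_mul_of_nonneg_left (hCα x) hKC0
  have hHab : ∀ x : Fin d → ℝ, ‖H.mulVec (α x)‖ ≤ (KH * Cα) * (1 + ‖x‖) := by
    intro x
    refine (hKH (α x)).trans ?_
    rw [mul_assoc]
    exact mul_le_mul_of_nonneg_left (hCα x) hKH0
  have hsubb : ∀ x : Fin d → ℝ, ‖x - μbar‖ ≤ (1 + ‖μbar‖) * (1 + ‖x‖) := by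
    intro x
    refine (norm_sub_le x μbar).trans ?_
    nlinarith [norm_nonneg x, norm_nonneg μbar]
  -- step 1 : the second moment of Φ
  have hq_meas : Measurable (fun y : Fin d → ℝ => y ⬝ᵥ Λ.mulVec y) :=
    measurable_dot measurable_id (measurable_mulVec Λ)
  have step1 : ∫ y, y ⬝ᵥ Λ.mulVec y ∂Φ
      = ∫ x, (a x ⬝ᵥ Λ.mulVec (a x) + b x ⬝ᵥ Λ.mulVec (b x)) ∂μ := by
    rw [hΦ', integral_map hF_meas.aemeasurable hq_meas.aestronglyMeasurable]
    have hint : Integrable (fun p : (Fin d → ℝ) × ℝ => F p ⬝ᵥ Λ.mulVec (F p)) (μ.prod γ) := by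
      have hγ2 : Integrable (fun e : ℝ => (d:ℝ) * KΛ * (Ka + Kb * |e|)^2) γ := by
        have hexp : (fun e : ℝ => (d:ℝ) * KΛ * (Ka + Kb * |e|)^2)
            = fun e => ((d:ℝ)*KΛ*Ka^2 + ((d:ℝ)*KΛ*(2*Ka*Kb)) * |e|) + ((d:ℝ)*KΛ*Kb^2) * e^2 := by
          funext e
          rw [← sq_abs e]
          ring
        rw [hexp]
        have h1 : Integrable (fun e : ℝ => (d:ℝ)*KΛ*Ka^2 + ((d:ℝ)*KΛ*(2*Ka*Kb)) * |e|) γ :=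
          (integrable_const _).add (hγabs.const_mul _)
        exact h1.add (gaussian_int_sq.const_mul _)
      have hg2 : Integrable (fun p : (Fin d → ℝ) × ℝ =>
          ((1 + ‖p.1‖)^2) * ((d:ℝ) * KΛ * (Ka + Kb * |p.2|)^2)) (μ.prod γ) :=
        Integrable.mul_prod hquad hγ2
      refine hg2.mono'
        ((measurable_dot hF_meas ((measurable_mulVec Λ).comp hF_meas)).aestronglyMeasurable)
        (ae_of_all _ fun p => ?_)
      have h0 := abs_dot_le (F p) (Λ.mulVec (F p))
      have h1 := hKΛ (F p)
      have hFb := hF_bd p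
      have hAB : (0:ℝ) ≤ (1 + ‖p.1‖) * (Ka + Kb * |p.2|) :=
        mul_nonneg (by positivity) (add_nonneg hKa0 (mul_nonneg hKb0 (abs_nonneg _)))
      have hsq : ‖F p‖ * ‖F p‖
          ≤ ((1 + ‖p.1‖) * (Ka + Kb * |p.2|)) * ((1 + ‖p.1‖) * (Ka + Kb * |p.2|)) :=
        mul_le_mul hFb hFb (norm_nonneg _) hAB
      rw [Real.norm_eq_abs]
      calc |F p ⬝ᵥ Λ.mulVec (F p)| ≤ (d:ℝ) * ‖F p‖ * ‖Λ.mulVec (F p)‖ := h0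
      _ ≤ (d:ℝ) * ‖F p‖ * (KΛ * ‖F p‖) := by
          refine mul_le_mul_of_nonneg_left h1 ?_
          positivity
      _ = ((d:ℝ) * KΛ) * (‖F p‖ * ‖F p‖) := by ring
      _ ≤ ((d:ℝ) * KΛ) * (((1 + ‖p.1‖) * (Ka + Kb * |p.2|)) * ((1 + ‖p.1‖) * (Ka + Kb * |p.2|))) :=
          mul_le_mul_of_nonneg_left hsq (mul_nonneg (Nat.cast_nonneg d) hKΛ0)
      _ = (1 + ‖p.1‖)^2 * ((d:ℝ) * KΛ * (Ka + Kb * |p.2|)^2) := by ring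
    rw [integral_prod _ hint]
    congr 1
    funext x
    have hexp : (fun e : ℝ => F (x, e) ⬝ᵥ Λ.mulVec (F (x, e)))
        = fun e => (a x ⬝ᵥ Λ.mulVec (a x))
          + (a x ⬝ᵥ Λ.mulVec (b x) + b x ⬝ᵥ Λ.mulVec (a x)) * e
          + (b x ⬝ᵥ Λ.mulVec (b x)) * e^2 := by
      funext e
      show (a x + e • b x) ⬝ᵥ Λ.mulVec (a x + e • b x) = _
      simp only [Matrix.mulVec_add, Matrix.mulVec_smul, dotProduct_add,
        add_dotProduct, dotProduct_smul, smul_dotProduct, smul_eq_mul]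
      ring
    rw [hexp]
    have ie1 : Integrable (fun e : ℝ =>
        (a x ⬝ᵥ Λ.mulVec (b x) + b x ⬝ᵥ Λ.mulVec (a x)) * e) γ := by
      have := gaussian_int_id.const_mul (a x ⬝ᵥ Λ.mulVec (b x) + b x ⬝ᵥ Λ.mulVec (a x))
      exact this
    have ie2 : Integrable (fun e : ℝ => (b x ⬝ᵥ Λ.mulVec (b x)) * e^2) γ :=
      gaussian_int_sq.const_mul _
    have ie0 : Integrable (fun _ : ℝ => a x ⬝ᵥ Λ.mulVec (a x)) γ := integrable_const _
    have ie01 : Integrable (fun e : ℝ => a x ⬝ᵥ Λ.mulVec (a x)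
        + (a x ⬝ᵥ Λ.mulVec (b x) + b x ⬝ᵥ Λ.mulVec (a x)) * e) γ := ie0.add ie1
    rw [integral_add ie01 ie2, integral_add ie0 ie1, integral_const, integral_const_mul,
      integral_const_mul, show ∫ (e : ℝ), e ∂γ = 0 from gaussian_mean,
      show ∫ (e : ℝ), e^2 ∂γ = 1 from gaussian_sq, probReal_univ]
    simp
  -- constants
  set c1v : Fin d → ℝ := Bb.mulVec μbar + Cb.mulVec lbar with hc1v
  set c2v : Fin d → ℝ := Db.mulVec μbar + Hb.mulVec lbar with hc2v
  -- step 2 : pointwise algebraic identity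
  have hpt : ∀ x, a x ⬝ᵥ Λ.mulVec (a x) + b x ⬝ᵥ Λ.mulVec (b x)
      = (x ⬝ᵥ (Bᵀ * Λ * B + Dᵀ * Λ * D).mulVec x
          + α x ⬝ᵥ (Hᵀ * Λ * H + Cᵀ * Λ * C).mulVec (α x)
          + 2 * ((x - μbar) ⬝ᵥ (Dᵀ * Λ * H + Bᵀ * Λ * C).mulVec (α x)))
        + (2 * (c1v ⬝ᵥ Λ.mulVec (B.mulVec x)) + 2 * (c2v ⬝ᵥ Λ.mulVec (D.mulVec x))
          + 2 * (c1v ⬝ᵥ Λ.mulVec (C.mulVec (α x))) + 2 * (c2v ⬝ᵥ Λ.mulVec (H.mulVec (α x)))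
          + 2 * ((D.mulVec μbar) ⬝ᵥ Λ.mulVec (H.mulVec (α x)))
          + 2 * ((B.mulVec μbar) ⬝ᵥ Λ.mulVec (C.mulVec (α x)))
          + (c1v ⬝ᵥ Λ.mulVec c1v + c2v ⬝ᵥ Λ.mulVec c2v)) := by
    intro x
    simp only [ha, hb, hc1v, hc2v]
    simp only [Matrix.add_mulVec, Matrix.mulVec_add, Matrix.mulVec_sub, hqd,
      dotProduct_add, add_dotProduct, dotProduct_sub,
      sub_dotProduct]
    linarith [hsym (B.mulVec x) (C.mulVec (α x)), hsym (B.mulVec x) (Bb.mulVec μbar),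
      hsym (B.mulVec x) (Cb.mulVec lbar), hsym (C.mulVec (α x)) (Bb.mulVec μbar),
      hsym (C.mulVec (α x)) (Cb.mulVec lbar), hsym (Bb.mulVec μbar) (Cb.mulVec lbar),
      hsym (D.mulVec x) (H.mulVec (α x)), hsym (D.mulVec x) (Db.mulVec μbar),
      hsym (D.mulVec x) (Hb.mulVec lbar), hsym (H.mulVec (α x)) (Db.mulVec μbar),
      hsym (H.mulVec (α x)) (Hb.mulVec lbar), hsym (Db.mulVec μbar) (Hb.mulVec lbar)]
  -- integrabilities of the pieces
  have iR1 : Integrable (fun x : Fin d → ℝ => x ⬝ᵥ (Bᵀ * Λ * B + Dᵀ * Λ * D).mulVec x) μ :=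
    iqq _ _ _ measurable_id measurable_id 1 1 zero_le_one zero_le_one hone hone
  have iR2 : Integrable (fun x => α x ⬝ᵥ (Hᵀ * Λ * H + Cᵀ * Λ * C).mulVec (α x)) μ :=
    iqq _ α α hαm hαm Cα Cα hCα0 hCα0 hCα hCα
  have iR3 : Integrable (fun x => (x - μbar) ⬝ᵥ (Dᵀ * Λ * H + Bᵀ * Λ * C).mulVec (α x)) μ :=
    iqq _ (fun x => x - μbar) α (measurable_id.sub measurable_const) hαm
      (1 + ‖μbar‖) Cα (by positivity) hCα0 hsubb hCα
  have iL1 : Integrable (fun x : Fin d → ℝ => c1v ⬝ᵥ Λ.mulVec (B.mulVec x)) μ :=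
    iqq Λ (fun _ => c1v) (fun x => B.mulVec x) measurable_const (measurable_mulVec B)
      ‖c1v‖ KB (norm_nonneg _) hKB0 (hcb c1v) hBxb
  have iL2 : Integrable (fun x : Fin d → ℝ => c2v ⬝ᵥ Λ.mulVec (D.mulVec x)) μ :=
    iqq Λ (fun _ => c2v) (fun x => D.mulVec x) measurable_const (measurable_mulVec D)
      ‖c2v‖ KD (norm_nonneg _) hKD0 (hcb c2v) hDxb
  have iL3 : Integrable (fun x : Fin d → ℝ => c1v ⬝ᵥ Λ.mulVec (C.mulVec (α x))) μ :=
    iqq Λ (fun _ => c1v) (fun x => C.mulVec (α x)) measurable_const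
      ((measurable_mulVec C).comp hαm) ‖c1v‖ (KC * Cα) (norm_nonneg _)
      (by positivity) (hcb c1v) hCab
  have iL4 : Integrable (fun x : Fin d → ℝ => c2v ⬝ᵥ Λ.mulVec (H.mulVec (α x))) μ :=
    iqq Λ (fun _ => c2v) (fun x => H.mulVec (α x)) measurable_const
      ((measurable_mulVec H).comp hαm) ‖c2v‖ (KH * Cα) (norm_nonneg _)
      (by positivity) (hcb c2v) hHab
  have iL5 : Integrable (fun x : Fin d → ℝ => (D.mulVec μbar) ⬝ᵥ Λ.mulVec (H.mulVec (α x))) μ :=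
    iqq Λ (fun _ => D.mulVec μbar) (fun x => H.mulVec (α x)) measurable_const
      ((measurable_mulVec H).comp hαm) ‖D.mulVec μbar‖ (KH * Cα) (norm_nonneg _)
      (by positivity) (hcb _) hHab
  have iL6 : Integrable (fun x : Fin d → ℝ => (B.mulVec μbar) ⬝ᵥ Λ.mulVec (C.mulVec (α x))) μ :=
    iqq Λ (fun _ => B.mulVec μbar) (fun x => C.mulVec (α x)) measurable_const
      ((measurable_mulVec C).comp hαm) ‖B.mulVec μbar‖ (KC * Cα) (norm_nonneg _)
      (by positivity) (hcb _) hCab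
  -- linear integrals
  have hlin : ∀ {k : ℕ} (c : Fin d → ℝ) (M : Matrix (Fin d) (Fin k) ℝ)
      (f : (Fin d → ℝ) → (Fin k → ℝ)), Integrable f μ →
      ∫ x, c ⬝ᵥ Λ.mulVec (M.mulVec (f x)) ∂μ = c ⬝ᵥ Λ.mulVec (M.mulVec (∫ x, f x ∂μ)) := by
    intro k c M f hf
    have h1 : (fun x => c ⬝ᵥ Λ.mulVec (M.mulVec (f x)))
        = fun x => c ⬝ᵥ (Λ * M).mulVec (f x) := by
      funext x; rw [Matrix.mulVec_mulVec]
    rw [h1, integral_dot_comm c (integrable_mulVec_comp (Λ * M) hf),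
      integral_mulVec_comm (Λ * M) hf, ← Matrix.mulVec_mulVec]
  -- step 3 : integrate the pointwise identity
  have step3 : ∫ x, (a x ⬝ᵥ Λ.mulVec (a x) + b x ⬝ᵥ Λ.mulVec (b x)) ∂μ
      = ((∫ x, x ⬝ᵥ (Bᵀ * Λ * B + Dᵀ * Λ * D).mulVec x ∂μ)
          + (∫ x, α x ⬝ᵥ (Hᵀ * Λ * H + Cᵀ * Λ * C).mulVec (α x) ∂μ)
          + 2 * (∫ x, (x - μbar) ⬝ᵥ (Dᵀ * Λ * H + Bᵀ * Λ * C).mulVec (α x) ∂μ))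
        + (2 * (c1v ⬝ᵥ Λ.mulVec (B.mulVec μbar)) + 2 * (c2v ⬝ᵥ Λ.mulVec (D.mulVec μbar))
          + 2 * (c1v ⬝ᵥ Λ.mulVec (C.mulVec lbar)) + 2 * (c2v ⬝ᵥ Λ.mulVec (H.mulVec lbar))
          + 2 * ((D.mulVec μbar) ⬝ᵥ Λ.mulVec (H.mulVec lbar))
          + 2 * ((B.mulVec μbar) ⬝ᵥ Λ.mulVec (C.mulVec lbar))
          + (c1v ⬝ᵥ Λ.mulVec c1v + c2v ⬝ᵥ Λ.mulVec c2v)) := by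
    rw [show (fun x => a x ⬝ᵥ Λ.mulVec (a x) + b x ⬝ᵥ Λ.mulVec (b x))
        = fun x => (x ⬝ᵥ (Bᵀ * Λ * B + Dᵀ * Λ * D).mulVec x
          + α x ⬝ᵥ (Hᵀ * Λ * H + Cᵀ * Λ * C).mulVec (α x)
          + 2 * ((x - μbar) ⬝ᵥ (Dᵀ * Λ * H + Bᵀ * Λ * C).mulVec (α x)))
        + (2 * (c1v ⬝ᵥ Λ.mulVec (B.mulVec x)) + 2 * (c2v ⬝ᵥ Λ.mulVec (D.mulVec x))
          + 2 * (c1v ⬝ᵥ Λ.mulVec (C.mulVec (α x))) + 2 * (c2v ⬝ᵥ Λ.mulVec (H.mulVec (α x)))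
          + 2 * ((D.mulVec μbar) ⬝ᵥ Λ.mulVec (H.mulVec (α x)))
          + 2 * ((B.mulVec μbar) ⬝ᵥ Λ.mulVec (C.mulVec (α x)))
          + (c1v ⬝ᵥ Λ.mulVec c1v + c2v ⬝ᵥ Λ.mulVec c2v)) from funext hpt]
    have iR12 : Integrable (fun x : Fin d → ℝ =>
        x ⬝ᵥ (Bᵀ * Λ * B + Dᵀ * Λ * D).mulVec x
          + α x ⬝ᵥ (Hᵀ * Λ * H + Cᵀ * Λ * C).mulVec (α x)) μ := iR1.add iR2
    have iMain : Integrable (fun x : Fin d → ℝ =>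
        x ⬝ᵥ (Bᵀ * Λ * B + Dᵀ * Λ * D).mulVec x
          + α x ⬝ᵥ (Hᵀ * Λ * H + Cᵀ * Λ * C).mulVec (α x)
          + 2 * ((x - μbar) ⬝ᵥ (Dᵀ * Λ * H + Bᵀ * Λ * C).mulVec (α x))) μ :=
      iR12.add (iR3.const_mul 2)
    have iT1 : Integrable (fun x : Fin d → ℝ =>
        2 * (c1v ⬝ᵥ Λ.mulVec (B.mulVec x))) μ := iL1.const_mul 2
    have iT12 : Integrable (fun x : Fin d → ℝ =>
        2 * (c1v ⬝ᵥ Λ.mulVec (B.mulVec x)) + 2 * (c2v ⬝ᵥ Λ.mulVec (D.mulVec x))) μ :=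
      iT1.add (iL2.const_mul 2)
    have iT13 : Integrable (fun x : Fin d → ℝ =>
        2 * (c1v ⬝ᵥ Λ.mulVec (B.mulVec x)) + 2 * (c2v ⬝ᵥ Λ.mulVec (D.mulVec x))
          + 2 * (c1v ⬝ᵥ Λ.mulVec (C.mulVec (α x)))) μ := iT12.add (iL3.const_mul 2)
    have iT14 : Integrable (fun x : Fin d → ℝ =>
        2 * (c1v ⬝ᵥ Λ.mulVec (B.mulVec x)) + 2 * (c2v ⬝ᵥ Λ.mulVec (D.mulVec x))
          + 2 * (c1v ⬝ᵥ Λ.mulVec (C.mulVec (α x))) + 2 * (c2v ⬝ᵥ Λ.mulVec (H.mulVec (α x)))) μ :=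
      iT13.add (iL4.const_mul 2)
    have iT15 : Integrable (fun x : Fin d → ℝ =>
        2 * (c1v ⬝ᵥ Λ.mulVec (B.mulVec x)) + 2 * (c2v ⬝ᵥ Λ.mulVec (D.mulVec x))
          + 2 * (c1v ⬝ᵥ Λ.mulVec (C.mulVec (α x))) + 2 * (c2v ⬝ᵥ Λ.mulVec (H.mulVec (α x)))
          + 2 * ((D.mulVec μbar) ⬝ᵥ Λ.mulVec (H.mulVec (α x)))) μ :=
      iT14.add (iL5.const_mul 2)
    have iT16 : Integrable (fun x : Fin d → ℝ =>
        2 * (c1v ⬝ᵥ Λ.mulVec (B.mulVec x)) + 2 * (c2v ⬝ᵥ Λ.mulVec (D.mulVec x))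
          + 2 * (c1v ⬝ᵥ Λ.mulVec (C.mulVec (α x))) + 2 * (c2v ⬝ᵥ Λ.mulVec (H.mulVec (α x)))
          + 2 * ((D.mulVec μbar) ⬝ᵥ Λ.mulVec (H.mulVec (α x)))
          + 2 * ((B.mulVec μbar) ⬝ᵥ Λ.mulVec (C.mulVec (α x)))) μ :=
      iT15.add (iL6.const_mul 2)
    have iTail : Integrable (fun x : Fin d → ℝ =>
        2 * (c1v ⬝ᵥ Λ.mulVec (B.mulVec x)) + 2 * (c2v ⬝ᵥ Λ.mulVec (D.mulVec x))
          + 2 * (c1v ⬝ᵥ Λ.mulVec (C.mulVec (α x))) + 2 * (c2v ⬝ᵥ Λ.mulVec (H.mulVec (α x)))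
          + 2 * ((D.mulVec μbar) ⬝ᵥ Λ.mulVec (H.mulVec (α x)))
          + 2 * ((B.mulVec μbar) ⬝ᵥ Λ.mulVec (C.mulVec (α x)))
          + (c1v ⬝ᵥ Λ.mulVec c1v + c2v ⬝ᵥ Λ.mulVec c2v)) μ :=
      iT16.add (integrable_const _)
    rw [integral_add iMain iTail, integral_add iR12 (iR3.const_mul 2),
      integral_add iR1 iR2, integral_const_mul,
      integral_add iT16 (integrable_const _), integral_add iT15 (iL6.const_mul 2),
      integral_add iT14 (iL5.const_mul 2), integral_add iT13 (iL4.const_mul 2),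
      integral_add iT12 (iL3.const_mul 2), integral_add iT1 (iL2.const_mul 2),
      integral_const_mul, integral_const_mul, integral_const_mul, integral_const_mul,
      integral_const_mul, integral_const_mul, integral_const, probReal_univ,
      hlin c1v B _ hid, hlin c2v D _ hid, hlin c1v C α hαint, hlin c2v H α hαint,
      hlin (D.mulVec μbar) H α hαint, hlin (B.mulVec μbar) C α hαint,
      ← hμbar, ← hlbar]
    simp
  -- mean of μ.map α
  have hmapmean : ∫ y, y ∂(μ.map α) = lbar := by
    rw [integral_map (f := fun y : Fin m → ℝ => y) hαm.aemeasurable aestronglyMeasurable_id]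
    exact hlbar.symm
  have hmapq : ∫ y, y ⬝ᵥ (Hᵀ * Λ * H + Cᵀ * Λ * C).mulVec y ∂(μ.map α)
      = ∫ x, α x ⬝ᵥ (Hᵀ * Λ * H + Cᵀ * Λ * C).mulVec (α x) ∂μ :=
    integral_map hαm.aemeasurable
      (measurable_dot measurable_id (measurable_mulVec _)).aestronglyMeasurable
  -- final assembly
  rw [quadVar, quadVar, quadVar, hmean, step1, step3, hmapq, hmapmean, ← hμbar]
  simp only [hqd, Matrix.add_mulVec, Matrix.mulVec_add, dotProduct_add,
    add_dotProduct, hc1v, hc2v]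
  linarith [hsym (B.mulVec μbar) (C.mulVec lbar), hsym (B.mulVec μbar) (Bb.mulVec μbar),
    hsym (B.mulVec μbar) (Cb.mulVec lbar), hsym (C.mulVec lbar) (Bb.mulVec μbar),
    hsym (C.mulVec lbar) (Cb.mulVec lbar), hsym (Bb.mulVec μbar) (Cb.mulVec lbar),
    hsym (D.mulVec μbar) (H.mulVec lbar), hsym (D.mulVec μbar) (Db.mulVec μbar),
    hsym (D.mulVec μbar) (Hb.mulVec lbar), hsym (H.mulVec lbar) (Db.mulVec μbar),
    hsym (H.mulVec lbar) (Hb.mulVec lbar), hsym (Db.mulVec μbar) (Hb.mulVec lbar)]
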